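/- arXiv:2401.04542 — 5 statements merged into one kernel-verified Lean document; each statement's English description precedes it below -/
import Mathlib

section
/- Let G be a finite group, p a prime not dividing |G|, V an F_p[G]-module, and H = V ⋊ G. Then a subgroup of H is normal if and only if it has the form W ⋊ N, where N is a normal subgroup of G and W ⊆ V is an F_p[G]-submodule such that N acts trivially on the quotient module V/W. -/
/-- The action of `G` on `V` by additive automorphisms, packaged as a map
`G →* MulAut (Multiplicative V)` suitable for forming the semidirect product `V ⋊ G`. -/
def semidirectAction (G V : Type*) [Group G] [AddCommGroup V] [DistribMulAction G V] :
    G →* MulAut (Multiplicative V) where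
  toFun g := AddEquiv.toMultiplicative (DistribMulAction.toAddAut G V g)
  map_one' := by ext v; simp
  map_mul' g h := by ext v; simp [mul_smul]

lemma semidirectAction_apply {G V : Type*} [Group G] [AddCommGroup V] [DistribMulAction G V]
    (g : G) (x : Multiplicative V) :
    semidirectAction G V g x = Multiplicative.ofAdd (g • Multiplicative.toAdd x) := rfl

/-- Let `G` be a finite group, `p` a prime not dividing `|G|`, `V` an
`𝔽_p[G]`-module and `H = V ⋊ G`.  A subgroup `M` of `H` is normal if and only if it is of the
form `W ⋊ N` where `N ⊴ G`, `W ⊆ V` is an `𝔽_p[G]`-submodule, and `N` acts trivially on `V/W`. -/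
theorem statement0 (p : ℕ) [Fact p.Prime] (G : Type*) [Group G] [Fintype G]
    (hp : ¬ p ∣ Fintype.card G)
    (V : Type*) [AddCommGroup V] [Module (ZMod p) V] [DistribMulAction G V]
    [SMulCommClass G (ZMod p) V]
    (M : Subgroup (Multiplicative V ⋊[semidirectAction G V] G)) :
    M.Normal ↔
      ∃ N : Subgroup G, N.Normal ∧
        ∃ W : Submodule (ZMod p) V,
          (∀ g : G, ∀ w ∈ W, g • w ∈ W) ∧
          (∀ n ∈ N, ∀ v : V, n • v - v ∈ W) ∧
          (∀ h : Multiplicative V ⋊[semidirectAction G V] G,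
            h ∈ M ↔ (Multiplicative.toAdd h.left ∈ W ∧ h.right ∈ N)) := by
  classical
  constructor
  · intro hM
    set A : AddSubgroup V :=
      { carrier := {v | SemidirectProduct.inl (Multiplicative.ofAdd v) ∈ M}
        add_mem' := by
          intro a b ha hb
          have := M.mul_mem ha hb
          rwa [← map_mul, ← ofAdd_add] at this
        zero_mem' := by
          have := M.one_mem
          simpa using this
        neg_mem' := by
          intro a ha
          have := M.inv_mem ha
          rwa [← map_inv, ← ofAdd_neg] at this } with hA
    have memA : ∀ v : V, v ∈ A ↔ SemidirectProduct.inl (Multiplicative.ofAdd v) ∈ M :=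
      fun v => Iff.rfl
    -- commutator fact
    have hcomm : ∀ x ∈ M, ∀ u : V, x.right • u - u ∈ A := by
      intro x hx u
      have h1 : x * (SemidirectProduct.inl (Multiplicative.ofAdd u) * x⁻¹ *
          (SemidirectProduct.inl (Multiplicative.ofAdd u))⁻¹) ∈ M :=
        M.mul_mem hx (hM.conj_mem _ (M.inv_mem hx) _)
      have hz : x * (SemidirectProduct.inl (Multiplicative.ofAdd u) * x⁻¹ *
          (SemidirectProduct.inl (Multiplicative.ofAdd u))⁻¹)
          = SemidirectProduct.inl (Multiplicative.ofAdd (x.right • u - u)) := by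
        refine SemidirectProduct.ext ?_ ?_
        · apply Multiplicative.toAdd.injective
          simp only [SemidirectProduct.mul_left, SemidirectProduct.inv_left,
            SemidirectProduct.mul_right, SemidirectProduct.inv_right,
            SemidirectProduct.left_inl, SemidirectProduct.right_inl,
            ← map_inv, semidirectAction_apply, toAdd_mul, toAdd_ofAdd, toAdd_inv,
            smul_sub, smul_add, smul_neg, smul_inv_smul, mul_one, mul_inv_rev, inv_inv]
          rw [mul_smul]
          simp [smul_inv_smul]
          abel
        · simp only [SemidirectProduct.mul_right, SemidirectProduct.inv_right,
            SemidirectProduct.right_inl, SemidirectProduct.left_inl]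
          group
      rw [hz] at h1
      exact h1
    -- power fact
    have hpow : ∀ x ∈ M, ∀ k : ℕ, ∃ w ∈ A,
        (x ^ k).left = Multiplicative.ofAdd (k • Multiplicative.toAdd x.left + w) := by
      intro x hx k
      induction k with
      | zero => exact ⟨0, A.zero_mem, by simp⟩
      | succ k ih =>
        obtain ⟨w, hw, hxk⟩ := ih
        refine ⟨(x.right • (k • Multiplicative.toAdd x.left + w)
            - (k • Multiplicative.toAdd x.left + w)) + w,
          A.add_mem (hcomm x hx _) hw, ?_⟩
        rw [pow_succ', SemidirectProduct.mul_left, hxk, semidirectAction_apply]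
        apply Multiplicative.toAdd.injective
        simp [succ_nsmul]
        abel
    -- every element of M has its V-part in A
    have hleft : ∀ x ∈ M, Multiplicative.toAdd x.left ∈ A := by
      intro x hx
      obtain ⟨w, hw, h⟩ := hpow x hx (Fintype.card G)
      have hrt : (x ^ Fintype.card G).right = 1 := by
        have : (x ^ Fintype.card G).right = x.right ^ Fintype.card G := by
          exact map_pow SemidirectProduct.rightHom x (Fintype.card G)
        rw [this, pow_card_eq_one]
      have hin : x ^ Fintype.card G = SemidirectProduct.inl
          (Multiplicative.ofAdd (Fintype.card G • Multiplicative.toAdd x.left + w)) := by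
        refine SemidirectProduct.ext ?_ ?_
        · rw [h, SemidirectProduct.left_inl]
        · rw [hrt, SemidirectProduct.right_inl]
      have hmemM : Fintype.card G • Multiplicative.toAdd x.left + w ∈ A := by
        rw [memA, ← hin]; exact pow_mem hx _
      have hcv : Fintype.card G • Multiplicative.toAdd x.left ∈ A := by
        simpa using A.sub_mem hmemM hw
      -- invert the scalar
      have hk : ((Fintype.card G : ZMod p)) ≠ 0 := by
        simpa [ZMod.natCast_eq_zero_iff] using hp
      have hW : (Fintype.card G : ZMod p) • Multiplicative.toAdd x.left
          ∈ AddSubgroup.toZModSubmodule p A := by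
        rw [Nat.cast_smul_eq_nsmul]
        simpa using hcv
      have := (AddSubgroup.toZModSubmodule p A).smul_mem
        ((Fintype.card G : ZMod p))⁻¹ hW
      rwa [← mul_smul, inv_mul_cancel₀ hk, one_smul,
        AddSubgroup.mem_toZModSubmodule] at this
    refine ⟨M.map SemidirectProduct.rightHom,
      hM.map _ SemidirectProduct.rightHom_surjective,
      AddSubgroup.toZModSubmodule p A, ?_, ?_, ?_⟩
    · intro g w hw
      rw [AddSubgroup.mem_toZModSubmodule] at hw ⊢
      rw [memA] at hw ⊢
      have := hM.conj_mem _ hw (SemidirectProduct.inr g)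
      rw [← map_inv, ← SemidirectProduct.inl_aut] at this
      simpa [semidirectAction_apply] using this
    · rintro n ⟨x, hx, rfl⟩ v
      rw [AddSubgroup.mem_toZModSubmodule]
      exact hcomm x hx v
    · intro h
      constructor
      · intro hh
        refine ⟨by rw [AddSubgroup.mem_toZModSubmodule]; exact hleft h hh, ⟨h, hh, rfl⟩⟩
      · rintro ⟨hv, x, hxM, hxr⟩
        rw [AddSubgroup.mem_toZModSubmodule] at hv
        have hd : Multiplicative.toAdd h.left - Multiplicative.toAdd x.left ∈ A :=
          A.sub_mem hv (hleft x hxM)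
        have heq : h = SemidirectProduct.inl
            (Multiplicative.ofAdd (Multiplicative.toAdd h.left
              - Multiplicative.toAdd x.left)) * x := by
          refine SemidirectProduct.ext ?_ ?_
          · apply Multiplicative.toAdd.injective
            rw [SemidirectProduct.mul_left, SemidirectProduct.left_inl,
              SemidirectProduct.right_inl, map_one]
            simp
          · rw [SemidirectProduct.mul_right, SemidirectProduct.right_inl, one_mul]
            exact hxr.symm
        rw [heq]
        exact M.mul_mem hd hxM
  · rintro ⟨N, hN, W, hWG, hNW, hmem⟩
    constructor
    intro x hx g
    rw [hmem] at hx
    rw [hmem]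
    constructor
    · have hcalc : Multiplicative.toAdd (g * x * g⁻¹).left
          = g.right • Multiplicative.toAdd x.left
            - ((g.right * x.right * g.right⁻¹) • Multiplicative.toAdd g.left
              - Multiplicative.toAdd g.left) := by
        simp [SemidirectProduct.mul_left, SemidirectProduct.inv_left,
          SemidirectProduct.mul_right, SemidirectProduct.inv_right,
          semidirectAction_apply, mul_smul, smul_neg, sub_eq_add_neg]
        abel
      rw [hcalc]
      exact W.sub_mem (hWG _ _ hx.1)
        (hNW _ (hN.conj_mem _ hx.2 _) _)
    · simp only [SemidirectProduct.mul_right, SemidirectProduct.inv_right]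
      exact hN.conj_mem _ hx.2 _
end

section
/- Let G be a finite group, p a prime not dividing |G|, V an F_p[G]-module, and H = V ⋊ G. If W ⋊ N is a normal subgroup of H (with N ⊴ G and W an F_p[G]-submodule on whose quotient N acts trivially), then dim_{F_p} W ≥ dim_{F_p} V − dim_{F_p} V^N, where V^N denotes the subspace of N-fixed vectors. -/
/-- The submodule of `N`-fixed vectors of `V`. -/
def fixedSubmodule (p : ℕ) [Fact p.Prime] {G V : Type*} [Group G] [AddCommGroup V]
    [Module (ZMod p) V] [DistribMulAction G V] [SMulCommClass G (ZMod p) V]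
    (N : Subgroup G) : Submodule (ZMod p) V where
  carrier := {v : V | ∀ n ∈ N, n • v = v}
  add_mem' := by intro a b ha hb n hn; rw [smul_add, ha n hn, hb n hn]
  zero_mem' := by intro n hn; rw [smul_zero]
  smul_mem' := by intro c v hv n hn; rw [smul_comm, hv n hn]

/-- If `W ⋊ N` is a normal subgroup of `H = V ⋊ G` (with `N ⊴ G`, `W` an
`𝔽_p[G]`-submodule on whose quotient `N` acts trivially), then
`dim W ≥ dim V − dim V^N`. -/
theorem statement1 (p : ℕ) [Fact p.Prime] (G : Type*) [Group G] [Fintype G]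
    (hp : ¬ p ∣ Fintype.card G)
    (V : Type*) [AddCommGroup V] [Module (ZMod p) V] [DistribMulAction G V]
    [SMulCommClass G (ZMod p) V] [FiniteDimensional (ZMod p) V]
    (N : Subgroup G) (hN : N.Normal)
    (W : Submodule (ZMod p) V)
    (hWstable : ∀ g : G, ∀ w ∈ W, g • w ∈ W)
    (htriv : ∀ n ∈ N, ∀ v : V, n • v - v ∈ W)
    (M : Subgroup (Multiplicative V ⋊[semidirectAction G V] G))
    (hM : M.Normal)
    (hMchar : ∀ h : Multiplicative V ⋊[semidirectAction G V] G,
      h ∈ M ↔ (Multiplicative.toAdd h.left ∈ W ∧ h.right ∈ N)) :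
    Module.finrank (ZMod p) V - Module.finrank (ZMod p) (fixedSubmodule p (V := V) N) ≤
      Module.finrank (ZMod p) W := by
  classical
  have hpN : ¬ p ∣ Fintype.card N := by
    intro h
    exact hp (h.trans (by simpa [Nat.card_eq_fintype_card] using Subgroup.card_subgroup_dvd_card N))
  set c : ZMod p := (Fintype.card N : ZMod p) with hcdef
  have hc : c ≠ 0 := by
    simpa [hcdef, ZMod.natCast_eq_zero_iff] using hpN
  -- the averaging sum
  set S : V → V := fun v => ∑ m : N, (m : G) • v with hSdef
  have hSadd : ∀ a b : V, S (a + b) = S a + S b := by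
    intro a b; simp [hSdef, smul_add, Finset.sum_add_distrib]
  have hSsmul : ∀ (r : ZMod p) (v : V), S (r • v) = r • S v := by
    intro r v; simp only [hSdef, smul_comm _ r, Finset.smul_sum]
  have hSfix : ∀ (n : G), n ∈ N → ∀ v : V, n • S v = S v := by
    intro n hn v
    have : n • S v = ∑ m : N, ((⟨n, hn⟩ * m : N) : G) • v := by
      simp [hSdef, Finset.smul_sum, mul_smul]
    rw [this]
    exact Fintype.sum_equiv (Equiv.mulLeft (⟨n, hn⟩ : N)) _ _ (fun m => rfl)
  let f : V →ₗ[ZMod p] V :=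
    { toFun := fun v => v - c⁻¹ • S v
      map_add' := by intro a b; rw [hSadd, smul_add]; abel
      map_smul' := by
        intro r v
        simp only [RingHom.id_apply, hSsmul, smul_sub, smul_comm r c⁻¹] }
  have hker : LinearMap.ker f = fixedSubmodule p (V := V) N := by
    ext v
    simp only [LinearMap.mem_ker, LinearMap.coe_mk, AddHom.coe_mk, f]
    constructor
    · intro h n hn
      have hv : v = c⁻¹ • S v := by
        have := sub_eq_zero.mp h; exact this
      calc n • v = n • (c⁻¹ • S v) := by rw [← hv]
        _ = c⁻¹ • (n • S v) := smul_comm n c⁻¹ (S v)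
        _ = c⁻¹ • S v := by rw [hSfix n hn]
        _ = v := hv.symm
    · intro h
      have hSv : S v = c • v := by
        have : ∀ m : N, (m : G) • v = v := fun m => h m m.2
        simp [hSdef, this, hcdef, Nat.cast_smul_eq_nsmul]
      rw [hSv, smul_smul, inv_mul_cancel₀ hc, one_smul, sub_self]
  have hrange : LinearMap.range f ≤ W := by
    rintro _ ⟨v, rfl⟩
    have hfv : f v = c⁻¹ • ∑ m : N, (v - (m : G) • v) := by
      show v - c⁻¹ • S v = _
      rw [Finset.sum_sub_distrib, Finset.sum_const, Finset.card_univ, smul_sub,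
        ← Nat.cast_smul_eq_nsmul (ZMod p) (Fintype.card N) v, ← hcdef, smul_smul,
        inv_mul_cancel₀ hc, one_smul]
    rw [hfv]
    refine W.smul_mem _ (Submodule.sum_mem W fun m _ => ?_)
    have := htriv (m : G) m.2 v
    simpa using W.neg_mem this
  have hrank : Module.finrank (ZMod p) (LinearMap.range f) +
      Module.finrank (ZMod p) (LinearMap.ker f) = Module.finrank (ZMod p) V :=
    LinearMap.finrank_range_add_finrank_ker f
  rw [hker] at hrank
  have h1 : Module.finrank (ZMod p) V -
      Module.finrank (ZMod p) (fixedSubmodule p (V := V) N) =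
      Module.finrank (ZMod p) (LinearMap.range f) := by omega
  rw [h1]
  exact Submodule.finrank_mono hrange
end

section
/- Let Π = (p_i) be a sequence of primes tending to infinity and let Γ be a Π-graded torsion group. Then for every finite-index normal subgroup N of Γ, there exists k such that Γ^{Π(k)} ⊆ N; i.e., the residual chain (Γ^{Π(n)}) is cofinal among finite-index normal subgroups. -/
open scoped commutatorElement

/-- `D_p(K) = K^p [K,K]`: the subgroup generated by `p`-th powers and commutators of
elements of `K`, as a subgroup of the ambient group. -/
def Dverbal {Γ : Type*} [Group Γ] (p : ℕ) (K : Subgroup Γ) : Subgroup Γ :=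
  Subgroup.closure ({x : Γ | ∃ k ∈ K, x = k ^ p} ∪
    {x : Γ | ∃ a ∈ K, ∃ b ∈ K, x = ⁅a, b⁆})

/-- The series `Γ^{Π(0)} = Γ`, `Γ^{Π(n)} = D_{p_n}(Γ^{Π(n-1)})`. -/
def piSeries {Γ : Type*} [Group Γ] (P : ℕ → ℕ) : ℕ → Subgroup Γ
  | 0 => ⊤
  | n + 1 => Dverbal (P (n + 1)) (piSeries P n)

lemma Dverbal_le {Γ : Type*} [Group Γ] (p : ℕ) (K : Subgroup Γ) : Dverbal p K ≤ K := by
  apply Subgroup.closure_le K |>.mpr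
  rintro x (⟨k, hk, rfl⟩ | ⟨a, ha, b, hb, rfl⟩)
  · exact K.pow_mem hk p
  · rw [commutatorElement_def]
    exact K.mul_mem (K.mul_mem (K.mul_mem ha hb) (K.inv_mem ha)) (K.inv_mem hb)

lemma mem_Dverbal_of_coprime {Γ : Type*} [Group Γ] {p q : ℕ} {K : Subgroup Γ} {h : Γ}
    (hh : h ∈ K) (hq1 : h ^ q = 1) (hq : 1 < q) (hcop : Nat.Coprime p q) :
    h ∈ Dverbal p K := by
  obtain ⟨a, -, ha⟩ := Nat.exists_mul_mod_eq_one_of_coprime hcop hq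
  have key : (h ^ a) ^ p = h := by
    rw [← pow_mul, mul_comm]
    conv_rhs => rw [← pow_one h, ← ha]
    conv_lhs => rw [← Nat.div_add_mod (p * a) q]
    rw [pow_add, pow_mul, hq1, one_pow, one_mul]
  have : h ∈ ({x : Γ | ∃ k ∈ K, x = k ^ p} ∪
      {x : Γ | ∃ a ∈ K, ∃ b ∈ K, x = ⁅a, b⁆}) :=
    Or.inl ⟨h ^ a, K.pow_mem hh a, key.symm⟩
  exact Subgroup.subset_closure this

lemma piSeries_antitone {Γ : Type*} [Group Γ] (P : ℕ → ℕ) :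
    Antitone (piSeries (Γ := Γ) P) := by
  apply antitone_nat_of_succ_le
  intro n
  exact Dverbal_le _ _

/-- If `Π` is a sequence of primes tending to infinity and `Γ` is a
`Π`-graded torsion group, then the residual chain `(Γ^{Π(n)})` is cofinal: every
finite-index normal subgroup of `Γ` contains some `Γ^{Π(k)}`. -/
theorem statement4 {Γ : Type*} [Group Γ] (P : ℕ → ℕ)
    (hP : ∀ i, (P i).Prime)
    (hPinf : Filter.Tendsto P Filter.atTop Filter.atTop)
    (htorsion : ∀ g : Γ, IsOfFinOrder g)
    (hfin : ∀ n, (piSeries (Γ := Γ) P n).FiniteIndex)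
    (hres : ⨅ n, piSeries (Γ := Γ) P n = ⊥)
    (N : Subgroup Γ) (hN : N.Normal) (hNfin : N.FiniteIndex) :
    ∃ k, piSeries P k ≤ N := by
  set m := N.index with hm
  have hm0 : m ≠ 0 := hNfin.index_ne_zero
  -- choose k with P n > m for all n ≥ k
  obtain ⟨k, hk⟩ := (Filter.eventually_atTop).mp (hPinf.eventually_gt_atTop m)
  refine ⟨k, ?_⟩
  intro g hg
  -- the order of g is coprime to m
  have hd0 : orderOf g ≠ 0 := (htorsion g).orderOf_pos.ne'
  have hcop : Nat.Coprime (orderOf g) m := by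
    by_contra hcopn
    set q := Nat.gcd (orderOf g) m |>.minFac with hq
    have hgcd1 : Nat.gcd (orderOf g) m ≠ 1 := hcopn
    have hqprime : q.Prime := Nat.minFac_prime hgcd1
    have hqd : q ∣ orderOf g := (Nat.minFac_dvd _).trans (Nat.gcd_dvd_left _ _)
    have hqm : q ∣ m := (Nat.minFac_dvd _).trans (Nat.gcd_dvd_right _ _)
    have hqle : q ≤ m := Nat.le_of_dvd (Nat.pos_of_ne_zero hm0) hqm
    set h : Γ := g ^ (orderOf g / q) with hh
    have hdivpos : 0 < orderOf g / q :=
      Nat.div_pos (Nat.le_of_dvd (Nat.pos_of_ne_zero hd0) hqd) hqprime.pos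
    have hhq : h ^ q = 1 := by
      rw [hh, ← pow_mul, Nat.div_mul_cancel hqd, pow_orderOf_eq_one]
    have hhne : h ≠ 1 := by
      intro h1
      have : orderOf g ∣ orderOf g / q := orderOf_dvd_of_pow_eq_one (by rw [← hh, h1])
      have hlt : orderOf g / q < orderOf g :=
        Nat.div_lt_self (Nat.pos_of_ne_zero hd0) hqprime.one_lt
      exact absurd (Nat.le_of_dvd hdivpos this) (not_le.mpr hlt)
    -- h stays in every term of the series
    have hstep : ∀ n, h ∈ piSeries (Γ := Γ) P (k + n) := by
      intro n
      induction n with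
      | zero => exact (piSeries P k).pow_mem hg _
      | succ n ih =>
        have hlarge : m < P (k + n + 1) := hk _ (by omega)
        have hcopP : Nat.Coprime (P (k + n + 1)) q := by
          rw [Nat.coprime_primes (hP _) hqprime]
          omega
        exact mem_Dverbal_of_coprime ih hhq hqprime.one_lt hcopP
    have hbot : h ∈ (⊥ : Subgroup Γ) := by
      rw [← hres, Subgroup.mem_iInf]
      intro n
      exact piSeries_antitone P (Nat.le_add_right n k) (by rw [Nat.add_comm]; exact hstep n)
    exact hhne (Subgroup.mem_bot.mp hbot)
  -- pass to the quotient
  have hdvd1 : orderOf ((g : Γ ⧸ N)) ∣ orderOf g := orderOf_map_dvd (QuotientGroup.mk' N) g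
  have hdvd2 : orderOf ((g : Γ ⧸ N)) ∣ m := by
    have := orderOf_dvd_natCard ((g : Γ ⧸ N))
    simpa [hm, Subgroup.index] using this
  have : orderOf ((g : Γ ⧸ N)) = 1 :=
    Nat.eq_one_of_dvd_coprimes hcop hdvd1 hdvd2
  have hg1 : ((g : Γ ⧸ N)) = 1 := orderOf_eq_one_iff.mp this
  exact (QuotientGroup.eq_one_iff g).mp hg1
end

section
/- Let p ≥ 2, c, d ≥ 1 and suppose a module V contains at most p^{(d+c)j} irreducible submodules of dimension j for each j ≥ 1, and every submodule of dimension at most r is a sum of irreducible submodules whose dimensions sum to at most r. Then the number of submodules of V of dimension at most r is at most p^{(d+c+1)r}. -/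
private lemma geom_aux (p E ℓ : ℕ) (hp : 2 ≤ p) (hE : ℓ ≤ E) :
    ∑ j ∈ Finset.Icc 1 ℓ, p ^ (E - j) ≤ p ^ E - p ^ (E - ℓ) := by
  induction ℓ with
  | zero => simp
  | succ n ih =>
    have hn : n ≤ E := by omega
    rw [Finset.sum_Icc_succ_top (by omega)]
    have h1 : p ^ (E - n) = p ^ (E - (n + 1)) * p := by
      rw [← pow_succ]
      congr 1
      omega
    have h3 : p ^ (E - n) ≤ p ^ E := Nat.pow_le_pow_right (by omega) (by omega)
    have h4 : 2 * p ^ (E - (n + 1)) ≤ p ^ (E - n) := by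
      rw [h1, mul_comm]
      exact Nat.mul_le_mul_left _ hp
    have := ih hn
    omega

private lemma arith_aux (p m ℓ : ℕ) (hp : 2 ≤ p) :
    1 + ∑ j ∈ Finset.Icc 1 ℓ, p ^ (m * j + (m + 1) * (ℓ - j)) ≤ p ^ ((m + 1) * ℓ) := by
  have hE : ℓ ≤ (m + 1) * ℓ := Nat.le_mul_of_pos_left ℓ (by omega)
  have hsum : ∑ j ∈ Finset.Icc 1 ℓ, p ^ (m * j + (m + 1) * (ℓ - j))
      = ∑ j ∈ Finset.Icc 1 ℓ, p ^ ((m + 1) * ℓ - j) := by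
    apply Finset.sum_congr rfl
    intro j hj
    simp only [Finset.mem_Icc] at hj
    obtain ⟨t, rfl⟩ : ∃ t, ℓ = j + t := ⟨ℓ - j, by omega⟩
    rw [Nat.add_sub_cancel_left]
    congr 1
    symm
    apply Nat.sub_eq_of_eq_add
    ring
  have h1 : (1 : ℕ) ≤ p ^ ((m + 1) * ℓ - ℓ) := Nat.one_le_pow _ _ (by omega)
  have h2 : p ^ ((m + 1) * ℓ - ℓ) ≤ p ^ ((m + 1) * ℓ) :=
    Nat.pow_le_pow_right (by omega) (by omega)
  have := geom_aux p ((m + 1) * ℓ) ℓ hp hE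
  omega

open scoped Classical in
private lemma count_aux {X : Type*} [Nonempty X] (p m r : ℕ) (hp : 2 ≤ p)
    (T : Finset X) (dim : X → ℕ) (Simple : X → Prop)
    (hdim1 : ∀ x ∈ T, Simple x → 1 ≤ dim x)
    (hcard : ∀ j, 1 ≤ j → j ≤ r →
      (T.filter fun x => Simple x ∧ dim x = j).card ≤ p ^ (m * j)) :
    ∀ ℓ ≤ r, (T.powerset.filter fun s => (∀ x ∈ s, Simple x) ∧ ∑ x ∈ s, dim x ≤ ℓ).card
      ≤ p ^ ((m + 1) * ℓ) := by
  classical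
  intro ℓ
  induction ℓ using Nat.strong_induction_on with
  | _ ℓ ih =>
    intro hℓr
    set F : ℕ → Finset (Finset X) :=
      fun n => T.powerset.filter fun s => (∀ x ∈ s, Simple x) ∧ ∑ x ∈ s, dim x ≤ n with hF
    show (F ℓ).card ≤ _
    have hFmem : ∀ n (s : Finset X), s ∈ F n ↔
        s ⊆ T ∧ (∀ x ∈ s, Simple x) ∧ ∑ x ∈ s, dim x ≤ n := by
      intro n s
      simp [hF, Finset.mem_filter, Finset.mem_powerset, and_assoc]
    set pick : Finset X → X := fun s => if h : s.Nonempty then h.choose else Classical.arbitrary X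
      with hpick
    have hpick_mem : ∀ s : Finset X, s.Nonempty → pick s ∈ s := by
      intro s hs
      simp only [hpick, dif_pos hs]
      exact hs.choose_spec
    set B : Finset (X × Finset X) := (Finset.Icc 1 ℓ).biUnion
      (fun j => (T.filter fun x => Simple x ∧ dim x = j) ×ˢ F (ℓ - j)) with hB
    set g : Finset X → X × Finset X := fun s => (pick s, s.erase (pick s)) with hg
    have hmaps : ∀ s ∈ (F ℓ).erase ∅, g s ∈ B := by
      intro s hs
      rw [Finset.mem_erase] at hs
      obtain ⟨hs0, hsF⟩ := hs
      rw [hFmem] at hsF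
      obtain ⟨hsT, hsimp, hssum⟩ := hsF
      have hne : s.Nonempty := Finset.nonempty_iff_ne_empty.mpr hs0
      rw [show g s = (pick s, s.erase (pick s)) from rfl]
      have hx0 : pick s ∈ s := hpick_mem s hne
      have hj1 : 1 ≤ dim (pick s) := hdim1 _ (hsT hx0) (hsimp _ hx0)
      have hjle : dim (pick s) ≤ ∑ x ∈ s, dim x :=
        Finset.single_le_sum (f := dim) (fun i _ => Nat.zero_le _) hx0
      rw [hB, Finset.mem_biUnion]
      refine ⟨dim (pick s), Finset.mem_Icc.mpr ⟨hj1, le_trans hjle hssum⟩, ?_⟩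
      rw [Finset.mem_product]
      constructor
      · rw [Finset.mem_filter]
        exact ⟨hsT hx0, hsimp _ hx0, rfl⟩
      · show s.erase (pick s) ∈ F (ℓ - dim (pick s))
        rw [hFmem]
        refine ⟨(Finset.erase_subset _ _).trans hsT, fun x hx => hsimp _ (Finset.mem_of_mem_erase hx), ?_⟩
        have hsub : ∑ x ∈ s.erase (pick s), dim x + dim (pick s) = ∑ x ∈ s, dim x :=
          Finset.sum_erase_add s dim hx0
        omega
    have hinj : Set.InjOn g ((F ℓ).erase ∅ : Finset (Finset X)) := by
      intro s1 h1 s2 h2 heq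
      simp only [Finset.coe_erase, Set.mem_diff, Finset.mem_coe] at h1 h2
      have hne1 : s1.Nonempty := Finset.nonempty_iff_ne_empty.mpr (by simpa using h1.2)
      have hne2 : s2.Nonempty := Finset.nonempty_iff_ne_empty.mpr (by simpa using h2.2)
      have hfst : pick s1 = pick s2 := congrArg Prod.fst heq
      have hsnd : s1.erase (pick s1) = s2.erase (pick s2) := congrArg Prod.snd heq
      have e1 := Finset.insert_erase (hpick_mem s1 hne1)
      have e2 := Finset.insert_erase (hpick_mem s2 hne2)
      rw [← e1, ← e2, hsnd, hfst]
    have hcard1 : (F ℓ).card ≤ ((F ℓ).erase ∅).card + 1 := by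
      by_cases h : ∅ ∈ F ℓ
      · have hpos : 1 ≤ (F ℓ).card := Finset.card_pos.mpr ⟨∅, h⟩
        rw [Finset.card_erase_of_mem h]
        omega
      · rw [Finset.erase_eq_of_notMem h]
        omega
    have hcard2 : ((F ℓ).erase ∅).card ≤ B.card :=
      Finset.card_le_card_of_injOn g hmaps hinj
    have hcard3 : B.card ≤ ∑ j ∈ Finset.Icc 1 ℓ,
        ((T.filter fun x => Simple x ∧ dim x = j).card * (F (ℓ - j)).card) := by
      refine (Finset.card_biUnion_le).trans ?_
      apply Finset.sum_le_sum
      intro j hj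
      rw [Finset.card_product]
    have hcard4 : ∑ j ∈ Finset.Icc 1 ℓ,
        ((T.filter fun x => Simple x ∧ dim x = j).card * (F (ℓ - j)).card)
        ≤ ∑ j ∈ Finset.Icc 1 ℓ, p ^ (m * j + (m + 1) * (ℓ - j)) := by
      apply Finset.sum_le_sum
      intro j hj
      simp only [Finset.mem_Icc] at hj
      rw [pow_add]
      exact Nat.mul_le_mul (hcard j hj.1 (le_trans hj.2 hℓr))
        (ih (ℓ - j) (by omega) (by omega))
    have := arith_aux p m ℓ hp
    omega

/-- Let `p ≥ 2`, `c, d ≥ 1` and suppose a module `V` contains at most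
`p^{(d+c)j}` irreducible submodules of dimension `j` for each `j ≥ 1`, every irreducible
submodule has dimension at least `1`, and every submodule of dimension at most `r` is a sum
of irreducible submodules whose dimensions sum to at most `r`.  Then the number of
submodules of `V` of dimension at most `r` is at most `p^{(d+c+1)r}`. -/
theorem statement13 (p c d r : ℕ) (hp : 2 ≤ p) (hc : 1 ≤ c) (hd : 1 ≤ d)
    (k : Type*) [Field k] (A : Type*) [Ring A] [Algebra k A]
    (V : Type*) [AddCommGroup V] [Module A V] [Module k V] [IsScalarTower k A V]
    (hsimple_dim : ∀ U : Submodule A V, IsSimpleModule A U →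
      1 ≤ Module.finrank k (U.restrictScalars k))
    (hcount : ∀ j : ℕ, 1 ≤ j →
      {U : Submodule A V | IsSimpleModule A U ∧
        Module.finrank k (U.restrictScalars k) = j}.ncard ≤ p ^ ((d + c) * j))
    (hsum : ∀ W : Submodule A V, Module.finrank k (W.restrictScalars k) ≤ r →
      ∃ s : Finset (Submodule A V), (∀ U ∈ s, IsSimpleModule A U) ∧
        W = s.sup id ∧ ∑ U ∈ s, Module.finrank k (U.restrictScalars k) ≤ r) :
    {W : Submodule A V | Module.finrank k (W.restrictScalars k) ≤ r}.ncard ≤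
      p ^ ((d + c + 1) * r) := by
  classical
  by_cases hfin : {W : Submodule A V | Module.finrank k (W.restrictScalars k) ≤ r}.Finite
  swap
  · rw [Set.Infinite.ncard (by exact hfin)]
    exact Nat.zero_le _
  set dim : Submodule A V → ℕ := fun U => Module.finrank k (U.restrictScalars k) with hdim
  set T : Finset (Submodule A V) := hfin.toFinset with hTdef
  have hTmem : ∀ U : Submodule A V, U ∈ T ↔ dim U ≤ r := by
    intro U
    rw [hTdef, Set.Finite.mem_toFinset]
    rfl
  -- apply the abstract counting lemma
  have hcard' : ∀ j, 1 ≤ j → j ≤ r →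
      (T.filter fun U : Submodule A V => IsSimpleModule A ↥U ∧ dim U = j).card
        ≤ p ^ ((d + c) * j) := by
    intro j hj1 hjr
    have hsub : ((T.filter fun U : Submodule A V => IsSimpleModule A ↥U ∧ dim U = j) :
        Set (Submodule A V)) = {U : Submodule A V | IsSimpleModule A ↥U ∧ dim U = j} := by
      ext U
      simp only [Finset.coe_filter, Set.mem_setOf_eq, Finset.mem_coe, hTmem]
      exact ⟨fun h => h.2, fun h => ⟨by rw [h.2]; exact hjr, h⟩⟩
    rw [← Set.ncard_coe_finset, hsub]
    exact hcount j hj1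
  have key := count_aux (X := Submodule A V) p (d + c) r hp T dim
    (fun U : Submodule A V => IsSimpleModule A ↥U)
    (fun U _ hU => hsimple_dim U hU)
    hcard' r le_rfl
  -- injection from the set of submodules into the finset of simple families
  set F : Finset (Finset (Submodule A V)) :=
    T.powerset.filter fun s => (∀ U ∈ s, IsSimpleModule A ↥U) ∧ ∑ U ∈ s, dim U ≤ r with hF
  have claimA : {W : Submodule A V | Module.finrank k (W.restrictScalars k) ≤ r}.ncard
      ≤ F.card := by
    set f : Submodule A V → Finset (Submodule A V) :=
      fun W => if h : dim W ≤ r then (hsum W h).choose else ∅ with hf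
    rw [← Set.ncard_coe_finset]
    apply Set.ncard_le_ncard_of_injOn f
    · intro W hW
      have hWr : dim W ≤ r := hW
      have hspec := (hsum W hWr).choose_spec
      simp only [hf, dif_pos hWr]
      simp only [Finset.mem_coe, hF, Finset.mem_filter, Finset.mem_powerset]
      refine ⟨?_, hspec.1, hspec.2.2⟩
      intro U hU
      rw [hTmem]
      calc dim U ≤ ∑ U' ∈ (hsum W hWr).choose, dim U' :=
            Finset.single_le_sum (f := dim) (fun i _ => Nat.zero_le _) hU
        _ ≤ r := hspec.2.2
    · intro W1 h1 W2 h2 heq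
      have h1r : dim W1 ≤ r := h1
      have h2r : dim W2 ≤ r := h2
      have s1 := (hsum W1 h1r).choose_spec
      have s2 := (hsum W2 h2r).choose_spec
      simp only [hf, dif_pos h1r, dif_pos h2r] at heq
      rw [s1.2.1, s2.2.1, heq]
  exact le_trans claimA key
end

section
/- Let G be a finite group with generating set T of size d, p a prime not dividing |G|, w_1,…,w_r ∈ F (the free group on d generators with presentation π: F → G), and H_1,…,H_s subgroups of G. If δ := 1 − Σ_i 1/(ord(π(w_i))(d−1)) − Σ_j |G|/(|H_j|·|N_G(H_j)|) > 0, then the quotient V of the relation module V_{T,p} ≅ F_p[G]^{d−1} ⊕ 1 by the submodules U_i = ⟨w_i^{ord(π(w_i))}⟩_{F_p[G]} and W_j = ⟨V_{T,p}^{H_j}⟩_{F_p[G]} satisfies dim_{F_p} V ≥ (d−1)|G|δ. -/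
/-- The submodule of `H`-fixed vectors of a representation `ρ` of `G` on `V`. -/
def fixedPoints {k G V : Type*} [CommSemiring k] [Group G] [AddCommMonoid V] [Module k V]
    (ρ : Representation k G V) (H : Subgroup G) : Submodule k V where
  carrier := {v : V | ∀ h ∈ H, ρ h v = v}
  add_mem' := by intro a b ha hb h hh; rw [map_add, ha h hh, hb h hh]
  zero_mem' := by intro h hh; rw [map_zero]
  smul_mem' := by intro c v hv h hh; rw [map_smul, hv h hh]

open Submodule Module

section Aux
variable {K V : Type*} [Field K] [AddCommGroup V] [Module K V] [FiniteDimensional K V]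

lemma aux_finrank_finset_sup_le {ι : Type*} [DecidableEq ι] (S : ι → Submodule K V) (t : Finset ι) :
    finrank K (t.sup S : Submodule K V) ≤ ∑ i ∈ t, finrank K (S i) := by
  induction t using Finset.induction_on with
  | empty => simp
  | @insert a t' ha ih =>
      rw [Finset.sup_insert, Finset.sum_insert ha]
      have h := Submodule.finrank_sup_add_finrank_inf_eq (S a) (t'.sup S)
      omega

lemma aux_finrank_iSup_le {ι : Type*} [Fintype ι] (S : ι → Submodule K V) :
    finrank K (⨆ i, S i : Submodule K V) ≤ ∑ i, finrank K (S i) := by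
  classical
  rw [← Finset.sup_univ_eq_iSup]
  exact aux_finrank_finset_sup_le S Finset.univ

lemma aux_rank_nullity (L M : Submodule K V) :
    finrank K M = finrank K (M.map L.mkQ) + finrank K (Submodule.comap M.subtype L) := by
  have h := LinearMap.finrank_range_add_finrank_ker (L.mkQ.comp M.subtype)
  rw [LinearMap.range_comp, Submodule.range_subtype, LinearMap.ker_comp, Submodule.ker_mkQ] at h
  exact h.symm

lemma aux_upper (L M : Submodule K V) :
    finrank K M ≤ finrank K (M.map L.mkQ) + finrank K L := by
  rw [aux_rank_nullity L M]
  have h1 : finrank K (Submodule.comap M.subtype L) ≤ finrank K L := by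
    rw [← Submodule.finrank_map_subtype_eq M (Submodule.comap M.subtype L)]
    exact Submodule.finrank_mono (Submodule.map_comap_le _ _)
  omega

lemma aux_lower (L M : Submodule K V) {v₀ : V} (h0 : v₀ ≠ 0) (hL : v₀ ∈ L) (hM : v₀ ∈ M) :
    finrank K (M.map L.mkQ) + 1 ≤ finrank K M := by
  rw [aux_rank_nullity L M]
  have : Nontrivial (Submodule.comap M.subtype L) := by
    refine nontrivial_of_ne ⟨⟨v₀, hM⟩, hL⟩ 0 ?_
    intro h
    have : v₀ = 0 := by
      have := congrArg (fun z : Submodule.comap M.subtype L => ((z : M) : V)) h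
      simpa using this
    exact h0 this
  have := Module.finrank_pos_iff (R := K) (M := Submodule.comap M.subtype L) |>.mpr this
  omega

lemma aux_common {ι : Type*} [Fintype ι] (S : ι → Submodule K V) {v₀ : V}
    (h0 : v₀ ≠ 0) (hv : ∀ i, v₀ ∈ S i) (b : ι → ℕ) (hb : ∀ i, finrank K (S i) ≤ b i + 1) :
    finrank K (⨆ i, S i : Submodule K V) ≤ 1 + ∑ i, b i := by
  set L : Submodule K V := Submodule.span K {v₀} with hLdef
  have hL : v₀ ∈ L := Submodule.mem_span_singleton_self v₀
  have hfL : finrank K L = 1 := finrank_span_singleton h0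
  have h1 : finrank K (⨆ i, S i : Submodule K V) ≤
      finrank K ((⨆ i, S i : Submodule K V).map L.mkQ) + 1 := by
    have := aux_upper L (⨆ i, S i)
    omega
  have h2 : ((⨆ i, S i : Submodule K V).map L.mkQ) = ⨆ i, (S i).map L.mkQ :=
    Submodule.map_iSup _ _
  have h3 : finrank K (⨆ i, (S i).map L.mkQ : Submodule K (V ⧸ L)) ≤
      ∑ i, finrank K ((S i).map L.mkQ) := aux_finrank_iSup_le _
  have h4 : ∀ i, finrank K ((S i).map L.mkQ) ≤ b i := by
    intro i
    have := aux_lower L (S i) h0 hL (hv i)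
    have := hb i
    omega
  have h5 : ∑ i, finrank K ((S i).map L.mkQ) ≤ ∑ i, b i := Finset.sum_le_sum fun i _ => h4 i
  rw [h2] at h1
  omega

end Aux

section Main

variable {p d : ℕ} [Fact p.Prime] {G : Type} [Group G] [Fintype G]
    {V : Type} [AddCommGroup V] [Module (ZMod p) V] [FiniteDimensional (ZMod p) V]
    (ρ : Representation (ZMod p) G V)

set_option linter.unusedSectionVars false in
/-- Dimension bound for the fixed-point space. -/
lemma fixed_bound
    (e : V ≃ₗ[ZMod p] (Fin (d - 1) → MonoidAlgebra (ZMod p) G) × (ZMod p))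
    (he : ∀ (g : G) (v : V),
      e (ρ g v) = (fun i => MonoidAlgebra.of (ZMod p) G g * (e v).1 i, (e v).2))
    (K' : Subgroup G) :
    finrank (ZMod p) (fixedPoints ρ K') ≤ (d - 1) * K'.index + 1 := by
  classical
  haveI := Fintype.ofFinite (G ⧸ K')
  let Φ : fixedPoints ρ K' →ₗ[ZMod p] (Fin (d - 1) → (G ⧸ K' → ZMod p)) × ZMod p :=
    { toFun := fun v => (fun i q => ((e v.1).1 i).coeff ((Quotient.out q)⁻¹), (e v.1).2)
      map_add' := by
        intro a b
        refine Prod.ext (funext fun i => funext fun q => ?_) ?_ <;>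
          simp [MonoidAlgebra.coeff_add, Finsupp.add_apply]
      map_smul' := by
        intro c a
        refine Prod.ext (funext fun i => funext fun q => ?_) ?_ <;>
          simp [MonoidAlgebra.coeff_smul, Finsupp.smul_apply] }
  have hinj : Function.Injective Φ := by
    rw [← LinearMap.ker_eq_bot, LinearMap.ker_eq_bot']
    intro v hv0
    have hsnd : (e v.1).2 = 0 := congrArg Prod.snd hv0
    have hfst : ∀ i x, ((e v.1).1 i).coeff x = 0 := by
      intro i x
      set q : G ⧸ K' := QuotientGroup.mk x⁻¹ with hq
      have hq0 : ((e v.1).1 i).coeff ((Quotient.out q)⁻¹) = 0 := by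
        have := congrArg Prod.fst hv0
        exact congrFun (congrFun this i) q
      have hmem : x * Quotient.out q ∈ K' := by
        have h1 : (QuotientGroup.mk x⁻¹ : G ⧸ K') = QuotientGroup.mk (Quotient.out q) :=
          (QuotientGroup.out_eq' q).symm
        have := QuotientGroup.eq.mp h1
        simpa using this
      have hfixv : ρ (x * Quotient.out q) v.1 = v.1 := v.2 (x * Quotient.out q) hmem
      have hee : (e v.1).1 i =
          MonoidAlgebra.of (ZMod p) G (x * Quotient.out q) * (e v.1).1 i := by
        conv_lhs => rw [← hfixv, he]
      have := congrArg (fun a => a.coeff x) hee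
      simp only [MonoidAlgebra.of_apply, MonoidAlgebra.coeff_single_mul_apply, one_mul] at this
      rw [this]
      have harg : (x * Quotient.out q)⁻¹ * x = (Quotient.out q)⁻¹ := by group
      rw [harg]
      exact hq0
    have : e v.1 = 0 := by
      refine Prod.ext ?_ hsnd
      funext i
      exact MonoidAlgebra.coeff_injective (Finsupp.ext fun x => hfst i x)
    have hv1 : v.1 = 0 := by
      apply e.injective
      simp [this]
    exact Subtype.ext hv1
  have htarget : finrank (ZMod p) ((Fin (d - 1) → (G ⧸ K' → ZMod p)) × ZMod p) =
      (d - 1) * K'.index + 1 := by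
    have hcard : Fintype.card (G ⧸ K') = K'.index := by
      rw [Subgroup.index_eq_card, Nat.card_eq_fintype_card]
    simp [Module.finrank_prod, Module.finrank_pi_fintype, Finset.sum_const, hcard, mul_comm]
  calc finrank (ZMod p) (fixedPoints ρ K')
      ≤ finrank (ZMod p) ((Fin (d - 1) → (G ⧸ K' → ZMod p)) × ZMod p) :=
        LinearMap.finrank_le_finrank_of_injective hinj
    _ = (d - 1) * K'.index + 1 := htarget

set_option linter.unusedSectionVars false in
lemma normalizer_stab (K' : Subgroup G) (x : G) (hx : x ∈ (Subgroup.normalizer (K' : Set G))) :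
    Submodule.map (ρ x) (fixedPoints ρ K') = fixedPoints ρ K' := by
  have key : ∀ y : G, y ∈ (Subgroup.normalizer (K' : Set G)) →
      Submodule.map (ρ y) (fixedPoints ρ K') ≤ fixedPoints ρ K' := by
    intro y hy
    rintro _ ⟨v, hv, rfl⟩
    intro h hh
    have h2 : y⁻¹ * h * y ∈ K' := by
      have := (Subgroup.mem_normalizer_iff.mp hy (y⁻¹ * h * y)).mpr
      apply this
      have : y * (y⁻¹ * h * y) * y⁻¹ = h := by group
      rw [this]
      exact hh
    calc ρ h (ρ y v) = ρ (h * y) v := by rw [map_mul]; rfl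
      _ = ρ (y * (y⁻¹ * h * y)) v := by congr 1; group
      _ = ρ y (ρ (y⁻¹ * h * y) v) := by rw [map_mul]; rfl
      _ = ρ y v := by rw [hv _ h2]
  refine le_antisymm (key x hx) ?_
  intro v hv
  refine ⟨ρ x⁻¹ v, key x⁻¹ (inv_mem hx) ⟨v, hv, rfl⟩, ?_⟩
  have : ρ x (ρ x⁻¹ v) = ρ (x * x⁻¹) v := by rw [map_mul]; rfl
  rw [this]
  simp

end Main

set_option maxHeartbeats 1000000 in
/-- Let `G` be a finite `d`-generated group, `p ∤ |G|`, and
`V_{T,p} ≅ 𝔽_p[G]^{d-1} ⊕ 1` the relation module (with representation `ρ`).  Given elements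
`g_i = π(w_i)` together with `g_i`-fixed vectors `u_i` (the classes of `w_i^{ord(π(w_i))}`)
and subgroups `H_1, …, H_s ≤ G`, if
`δ = 1 − Σ_i 1/(ord(π(w_i))(d−1)) − Σ_j |G|/(|H_j|·|N_G(H_j)|) > 0`, then the quotient `V`
of `V_{T,p}` by the submodules `U_i = ⟨u_i⟩_{𝔽_p[G]}` and `W_j = ⟨V_{T,p}^{H_j}⟩_{𝔽_p[G]}`
satisfies `dim V ≥ (d−1)|G|δ`. -/
theorem statement18 (p d : ℕ) [Fact p.Prime] (G : Type) [Group G] [Fintype G]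
    (hp : ¬ p ∣ Fintype.card G) (hd : 2 ≤ d)
    (V : Type) [AddCommGroup V] [Module (ZMod p) V] [FiniteDimensional (ZMod p) V]
    (ρ : Representation (ZMod p) G V)
    (e : V ≃ₗ[ZMod p] (Fin (d - 1) → MonoidAlgebra (ZMod p) G) × (ZMod p))
    (he : ∀ (g : G) (v : V),
      e (ρ g v) = (fun i => MonoidAlgebra.of (ZMod p) G g * (e v).1 i, (e v).2))
    (r s : ℕ) (g : Fin r → G) (u : Fin r → V)
    (hu : ∀ i, ρ (g i) (u i) = u i)
    (H : Fin s → Subgroup G)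
    (U : Fin r → Submodule (ZMod p) V)
    (hU : ∀ i, U i = Submodule.span (ZMod p) (Set.range fun h : G => ρ h (u i)))
    (W : Fin s → Submodule (ZMod p) V)
    (hW : ∀ j, W j = Submodule.span (ZMod p)
      (⋃ x : G, (ρ x) '' (fixedPoints ρ (H j) : Set V)))
    (δ : ℝ)
    (hδdef : δ = 1 - (∑ i : Fin r, 1 / ((orderOf (g i) : ℝ) * ((d : ℝ) - 1)))
      - (∑ j : Fin s, (Fintype.card G : ℝ) /
          ((Nat.card (H j) : ℝ) * (Nat.card (Subgroup.normalizer (H j : Set G)) : ℝ))))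
    (hδ : 0 < δ) :
    ((d : ℝ) - 1) * (Fintype.card G : ℝ) * δ ≤
      (Module.finrank (ZMod p) (V ⧸ ((⨆ i, U i) ⊔ (⨆ j, W j))) : ℝ) := by
  classical
  haveI : Fact (1 < p) := ⟨(Fact.out : p.Prime).one_lt⟩
  have hd1 : (1 : ℕ) ≤ d := by omega
  set n := Fintype.card G with hn
  -- finrank of V
  have hV : finrank (ZMod p) V = (d - 1) * n + 1 := by
    rw [e.finrank_eq]
    simp [MonoidAlgebra, Module.finrank_eq_card_basis (MonoidAlgebra.basis G (ZMod p)), Module.finrank_prod, Module.finrank_pi_fintype, Finset.sum_const,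
      mul_comm, hn]
  -- the common fixed vector
  set v₀ : V := e.symm (0, 1) with hv₀def
  have hev₀ : e v₀ = (0, 1) := e.apply_symm_apply _
  have h0 : v₀ ≠ 0 := by
    intro h
    have h2 : ((0, 1) : (Fin (d - 1) → MonoidAlgebra (ZMod p) G) × ZMod p) = 0 := by
      rw [← hev₀, h, map_zero]
    exact one_ne_zero (congrArg Prod.snd h2)
  have hfix : ∀ x : G, ρ x v₀ = v₀ := by
    intro x
    apply e.injective
    rw [he, hev₀]
    exact Prod.ext (funext fun i => by simp) rfl
  have hv₀F : ∀ (K' : Subgroup G), v₀ ∈ fixedPoints ρ K' := fun K' h _ => hfix h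
  -- bound on the U i
  have hUb : ∀ i, finrank (ZMod p) (U i) ≤ (Subgroup.zpowers (g i)).index := by
    intro i
    haveI := Fintype.ofFinite (G ⧸ Subgroup.zpowers (g i))
    have hpn : ∀ m : ℕ, ρ (g i ^ m) (u i) = u i := by
      intro m
      induction m with
      | zero => simp
      | succ m ih => rw [pow_succ, map_mul, Module.End.mul_apply, hu i, ih]
    have hpow : ∀ z ∈ Subgroup.zpowers (g i), ρ z (u i) = u i := by
      intro z hz
      obtain ⟨m, hm⟩ := (Submonoid.mem_powers_iff z (g i)).mp (mem_powers_iff_mem_zpowers.mpr hz)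
      rw [← hm]; exact hpn m
    set f' : G ⧸ Subgroup.zpowers (g i) → V := fun q => ρ (Quotient.out q) (u i) with hf'
    have hsub : (Set.range fun h : G => ρ h (u i)) ⊆ Set.range f' := by
      rintro _ ⟨h, rfl⟩
      refine ⟨QuotientGroup.mk h, ?_⟩
      have hz : h⁻¹ * Quotient.out (QuotientGroup.mk (s := Subgroup.zpowers (g i)) h) ∈
          Subgroup.zpowers (g i) := QuotientGroup.eq.mp (QuotientGroup.out_eq' _).symm
      show ρ (Quotient.out (QuotientGroup.mk h)) (u i) = ρ h (u i)
      have hout : h * (h⁻¹ * Quotient.out (QuotientGroup.mk (s := Subgroup.zpowers (g i)) h)) =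
          Quotient.out (QuotientGroup.mk (s := Subgroup.zpowers (g i)) h) := by group
      rw [← hout, map_mul, Module.End.mul_apply, hpow _ hz]
    calc finrank (ZMod p) (U i)
        ≤ finrank (ZMod p) (Submodule.span (ZMod p) (Set.range f')) := by
          rw [hU i]; exact Submodule.finrank_mono (Submodule.span_mono hsub)
      _ ≤ (Set.range f').toFinset.card := finrank_span_le_card _
      _ ≤ Fintype.card (G ⧸ Subgroup.zpowers (g i)) := by
          rw [Set.toFinset_card]; exact Fintype.card_range_le f'
      _ = (Subgroup.zpowers (g i)).index := by
          rw [Subgroup.index_eq_card, Nat.card_eq_fintype_card]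
  -- rewrite the W j
  have hWj : ∀ j, W j = ⨆ q : G ⧸ (Subgroup.normalizer (H j : Set G)),
      Submodule.map (ρ (Quotient.out q)) (fixedPoints ρ (H j)) := by
    intro j
    rw [hW j, Submodule.span_iUnion]
    have h1 : ∀ x : G, Submodule.span (ZMod p) (ρ x '' (fixedPoints ρ (H j) : Set V)) =
        Submodule.map (ρ x) (fixedPoints ρ (H j)) := by
      intro x; rw [← Submodule.map_span, Submodule.span_eq]
    simp_rw [h1]
    apply le_antisymm
    · refine iSup_le fun x => ?_
      have hz : x⁻¹ * Quotient.out (QuotientGroup.mk (s := (Subgroup.normalizer (H j : Set G))) x) ∈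
          (Subgroup.normalizer (H j : Set G)) := QuotientGroup.eq.mp (QuotientGroup.out_eq' _).symm
      have hmm : Submodule.map (ρ x) (fixedPoints ρ (H j)) =
          Submodule.map (ρ (Quotient.out (QuotientGroup.mk (s := (Subgroup.normalizer (H j : Set G))) x)))
            (fixedPoints ρ (H j)) := by
        have hout : x * (x⁻¹ * Quotient.out (QuotientGroup.mk (s := (Subgroup.normalizer (H j : Set G))) x)) =
            Quotient.out (QuotientGroup.mk (s := (Subgroup.normalizer (H j : Set G))) x) := by group
        rw [← hout, map_mul, Module.End.mul_eq_comp, Submodule.map_comp,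
          normalizer_stab ρ (H j) _ hz]
      rw [hmm]
      exact le_iSup (fun q : G ⧸ (Subgroup.normalizer (H j : Set G)) =>
        Submodule.map (ρ (Quotient.out q)) (fixedPoints ρ (H j))) _
    · exact iSup_le fun q => le_iSup
        (fun x : G => Submodule.map (ρ x) (fixedPoints ρ (H j))) (Quotient.out q)
  -- bound on the sup of the W j
  haveI : ∀ j, Fintype (G ⧸ (Subgroup.normalizer (H j : Set G))) := fun j => Fintype.ofFinite _
  have hWsup : finrank (ZMod p) (⨆ j, W j : Submodule (ZMod p) V) ≤
      1 + ∑ j, (Subgroup.normalizer (H j : Set G)).index * ((d - 1) * (H j).index) := by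
    have heq : (⨆ j, W j : Submodule (ZMod p) V) =
        ⨆ jq : Σ j : Fin s, G ⧸ (Subgroup.normalizer (H j : Set G)),
          Submodule.map (ρ (Quotient.out jq.2)) (fixedPoints ρ (H jq.1)) := by
      rw [iSup_sigma]; exact iSup_congr hWj
    rw [heq]
    refine le_trans (aux_common _ h0 ?_ (fun jq => (d - 1) * (H jq.1).index) ?_) ?_
    · intro jq; exact ⟨v₀, hv₀F _, hfix _⟩
    · intro jq
      exact le_trans (Submodule.finrank_map_le _ _) (fixed_bound ρ e he (H jq.1))
    · have hss : (∑ jq : Σ j : Fin s, G ⧸ (Subgroup.normalizer (H j : Set G)), (d - 1) * (H jq.1).index)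
          = ∑ j, (Subgroup.normalizer (H j : Set G)).index * ((d - 1) * (H j).index) := by
        rw [← Finset.univ_sigma_univ, Finset.sum_sigma]
        refine Finset.sum_congr rfl fun j _ => ?_
        have h2 : ∑ _q : G ⧸ (Subgroup.normalizer (H j : Set G)), (d - 1) * (H j).index =
            Fintype.card (G ⧸ (Subgroup.normalizer (H j : Set G))) * ((d - 1) * (H j).index) := by
          rw [Finset.sum_const, smul_eq_mul, Finset.card_univ]
        exact h2.trans (by
          rw [show (Subgroup.normalizer (H j : Set G)).index = Fintype.card (G ⧸ (Subgroup.normalizer (H j : Set G))) from by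
            rw [Subgroup.index_eq_card, Nat.card_eq_fintype_card]])
      omega
  -- total bound
  have hsup : finrank (ZMod p) (((⨆ i, U i) ⊔ (⨆ j, W j)) : Submodule (ZMod p) V) ≤
      (∑ i, (Subgroup.zpowers (g i)).index) +
        (1 + ∑ j, (Subgroup.normalizer (H j : Set G)).index * ((d - 1) * (H j).index)) := by
    have h1 := Submodule.finrank_sup_add_finrank_inf_eq (⨆ i, U i) (⨆ j, W j)
    have h2 : finrank (ZMod p) (⨆ i, U i : Submodule (ZMod p) V) ≤
        ∑ i, (Subgroup.zpowers (g i)).index :=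
      le_trans (aux_finrank_iSup_le U) (Finset.sum_le_sum fun i _ => hUb i)
    omega
  have hQ : finrank (ZMod p) (V ⧸ ((⨆ i, U i) ⊔ (⨆ j, W j))) +
      finrank (ZMod p) (((⨆ i, U i) ⊔ (⨆ j, W j)) : Submodule (ZMod p) V) = (d - 1) * n + 1 := by
    rw [Submodule.finrank_quotient_add_finrank, hV]
  -- numerics
  have hnpos : (0 : ℝ) < (n : ℝ) := by
    have : 0 < n := Fintype.card_pos
    exact_mod_cast this
  have hdpos : (0 : ℝ) < (d : ℝ) - 1 := by
    have : (2 : ℝ) ≤ (d : ℝ) := by exact_mod_cast hd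
    linarith
  have hAi : ∀ i, ((Subgroup.zpowers (g i)).index : ℝ) * (orderOf (g i) : ℝ) = n := by
    intro i
    have h := Subgroup.index_mul_card (Subgroup.zpowers (g i))
    rw [Nat.card_zpowers, Nat.card_eq_fintype_card] at h
    exact_mod_cast h
  have hHj : ∀ j, ((H j).index : ℝ) * (Nat.card (H j) : ℝ) = n := by
    intro j
    have h := Subgroup.index_mul_card (H j)
    rw [show Nat.card G = Fintype.card G from Nat.card_eq_fintype_card] at h
    exact_mod_cast h
  have hNj : ∀ j, ((Subgroup.normalizer (H j : Set G)).index : ℝ) * (Nat.card (Subgroup.normalizer (H j : Set G)) : ℝ) = n := by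
    intro j
    have h := Subgroup.index_mul_card (Subgroup.normalizer (H j : Set G))
    rw [show Nat.card G = Fintype.card G from Nat.card_eq_fintype_card] at h
    exact_mod_cast h
  have hordpos : ∀ i, (0 : ℝ) < (orderOf (g i) : ℝ) := by
    intro i; exact_mod_cast orderOf_pos (g i)
  have hHpos : ∀ j, (0 : ℝ) < (Nat.card (H j) : ℝ) := by
    intro j; exact_mod_cast Nat.card_pos
  have hNpos : ∀ j, (0 : ℝ) < (Nat.card (Subgroup.normalizer (H j : Set G)) : ℝ) := by
    intro j; exact_mod_cast Nat.card_pos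
  have hA : ((∑ i, (Subgroup.zpowers (g i)).index : ℕ) : ℝ)
      = ((d : ℝ) - 1) * n * (∑ i : Fin r, 1 / ((orderOf (g i) : ℝ) * ((d : ℝ) - 1))) := by
    push_cast
    rw [Finset.mul_sum]
    refine Finset.sum_congr rfl fun i _ => ?_
    have h := hAi i
    have ho := hordpos i
    have hi : ((Subgroup.zpowers (g i)).index : ℝ) = n / (orderOf (g i) : ℝ) := by
      rw [eq_div_iff (ne_of_gt ho)]; exact h
    rw [hi]
    field_simp
  have hB : ((∑ j, (Subgroup.normalizer (H j : Set G)).index * ((d - 1) * (H j).index) : ℕ) : ℝ)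
      = ((d : ℝ) - 1) * n * (∑ j : Fin s, (n : ℝ) /
          ((Nat.card (H j) : ℝ) * (Nat.card (Subgroup.normalizer (H j : Set G)) : ℝ))) := by
    push_cast [Nat.cast_sub hd1]
    rw [Finset.mul_sum]
    refine Finset.sum_congr rfl fun j _ => ?_
    have hH' : ((H j).index : ℝ) = n / (Nat.card (H j) : ℝ) := by
      rw [eq_div_iff (ne_of_gt (hHpos j))]; exact hHj j
    have hN' : ((Subgroup.normalizer (H j : Set G)).index : ℝ) = n / (Nat.card (Subgroup.normalizer (H j : Set G)) : ℝ) := by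
      rw [eq_div_iff (ne_of_gt (hNpos j))]; exact hNj j
    rw [hH', hN']
    field_simp
  have hsupR : (finrank (ZMod p) (((⨆ i, U i) ⊔ (⨆ j, W j)) : Submodule (ZMod p) V) : ℝ) ≤
      ((∑ i, (Subgroup.zpowers (g i)).index : ℕ) : ℝ) + 1 +
        ((∑ j, (Subgroup.normalizer (H j : Set G)).index * ((d - 1) * (H j).index) : ℕ) : ℝ) := by
    have := hsup
    push_cast
    exact_mod_cast by
      have h := hsup
      push_cast at h ⊢
      linarith
  have hQR : (finrank (ZMod p) (V ⧸ ((⨆ i, U i) ⊔ (⨆ j, W j))) : ℝ)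
      = ((d : ℝ) - 1) * n + 1 -
        (finrank (ZMod p) (((⨆ i, U i) ⊔ (⨆ j, W j)) : Submodule (ZMod p) V) : ℝ) := by
    have h := congrArg (Nat.cast (R := ℝ)) hQ
    push_cast [Nat.cast_sub hd1] at h
    linarith
  rw [hδdef]
  have hexp : ((d : ℝ) - 1) * n *
      (1 - (∑ i : Fin r, 1 / ((orderOf (g i) : ℝ) * ((d : ℝ) - 1)))
        - (∑ j : Fin s, (n : ℝ) / ((Nat.card (H j) : ℝ) * (Nat.card (Subgroup.normalizer (H j : Set G)) : ℝ))))
      = ((d : ℝ) - 1) * n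
        - ((d : ℝ) - 1) * n * (∑ i : Fin r, 1 / ((orderOf (g i) : ℝ) * ((d : ℝ) - 1)))
        - ((d : ℝ) - 1) * n * (∑ j : Fin s, (n : ℝ) /
            ((Nat.card (H j) : ℝ) * (Nat.card (Subgroup.normalizer (H j : Set G)) : ℝ))) := by ring
  rw [hexp]
  linarith [hQR, hsupR, hA, hB]
end
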